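/- For all integers q ≥ 2 and n, R with 0 < R < n, every R-deletion-covering code C ⊆ Σ_q^n satisfies |C| ≥ q · Σ_{r=1}^{n−R} (q−1)^{r−1} · C(n−R−1, r−1) / C(r+3R−1, R); equivalently, K_D^q(n,R) ≥ q · Σ_{r=1}^{n−R} (q−1)^{r−1} C(n−R−1, r−1) / C(r+3R−1, R). -/

import Mathlib

namespace DelCov

variable {α : Type*} [DecidableEq α]




/-- number of "boundaries" in `l` when preceded by symbol `a`. -/
def rcF (a : α) : List α → ℕ
  | [] => 0
  | b :: t => (if a = b then 0 else 1) + rcF b t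

/-- number of runs of a list. -/
def runCount : List α → ℕ
  | [] => 0
  | a :: t => 1 + rcF a t

@[simp] lemma rcF_nil (a : α) : rcF a ([] : List α) = 0 := rfl
lemma rcF_cons (a b : α) (t : List α) :
    rcF a (b :: t) = (if a = b then 0 else 1) + rcF b t := rfl
@[simp] lemma runCount_nil : runCount ([] : List α) = 0 := rfl
lemma runCount_cons (a : α) (t : List α) : runCount (a :: t) = 1 + rcF a t := rfl

lemma rcF_swap (a b : α) (l : List α) : rcF b l ≤ rcF a l + 1 := by
  cases l with
  | nil => simp
  | cons x t =>
    simp only [rcF_cons]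
    split <;> split <;> omega

lemma runCount_cons_le (a : α) (l : List α) : runCount (a :: l) ≤ runCount l + 1 := by
  cases l with
  | nil => simp [runCount_cons]
  | cons b t =>
    simp only [runCount_cons, rcF_cons]
    split <;> omega

lemma rcF_sublist {y c : List α} (h : y.Sublist c) (a : α) :
    rcF a c ≤ rcF a y + 2 * (c.length - y.length) := by
  induction h generalizing a with
  | slnil => simp
  | @cons y c b h ih =>
    have hlen := h.length_le
    have h1 : rcF a (b :: c) ≤ 1 + rcF b c := by
      simp only [rcF_cons]; split <;> omega
    have h2 := ih b
    have h3 := rcF_swap a b y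
    simp only [List.length_cons]
    omega
  | @cons_cons y c b h ih =>
    have hlen := h.length_le
    have h2 := ih b
    simp only [rcF_cons, List.length_cons]
    split <;> omega

lemma runCount_sublist {y c : List α} (h : y.Sublist c) :
    runCount c ≤ runCount y + 2 * (c.length - y.length) := by
  induction h with
  | slnil => simp
  | @cons y c b h ih =>
    have hlen := h.length_le
    have h1 := runCount_cons_le b c
    simp only [List.length_cons]
    omega
  | @cons_cons y c b h _ =>
    have hlen := h.length_le
    have h2 := rcF_sublist h b
    simp only [runCount_cons, List.length_cons]
    omega

lemma runCount_pos {l : List α} (h : l ≠ []) : 1 ≤ runCount l := by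
  cases l with
  | nil => simp at h
  | cons a t => simp [runCount_cons]


/-- length of the initial run of `a`'s. -/
def lead (a : α) : List α → ℕ
  | [] => 0
  | b :: t => if b = a then lead a t + 1 else 0

/-- length of the initial run of `a`'s. -/
lemma lead_le_length (a : α) (l : List α) : lead a l ≤ l.length := by
  induction l with
  | nil => simp [lead]
  | cons b t ih =>
    simp only [lead, List.length_cons]
    split <;> omega

lemma take_lead {a : α} {l : List α} {t : ℕ} (h : t ≤ lead a l) :
    l.take t = List.replicate t a := by
  induction l generalizing t with
  | nil => simp [lead] at h; simp [h]
  | cons b l ih =>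
    cases t with
    | zero => simp
    | succ t =>
      by_cases hb : b = a
      · subst hb
        simp [lead] at h
        simp [List.replicate_succ, ih h]
      · simp [lead, hb] at h

lemma head_drop_lead (a : α) (l : List α) : (l.drop (lead a l)).head? ≠ some a := by
  induction l with
  | nil => simp
  | cons b t ih =>
    by_cases hb : b = a
    · subst hb
      rw [lead, if_pos rfl, List.drop_succ_cons]
      exact ih
    · rw [lead, if_neg hb, List.drop_zero]
      simpa using hb

omit [DecidableEq α] in
lemma sublist_of_head_ne {a : α} {c' z : List α} :
    ∀ {J : ℕ}, z.Sublist (List.replicate J a ++ c') → z.head? ≠ some a → z.Sublist c' := by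
  intro J
  induction J with
  | zero => intro h _; simpa using h
  | succ J ih =>
    intro h hz
    rw [List.replicate_succ, List.cons_append] at h
    cases h with
    | cons _ h => exact ih h hz
    | cons_cons _ h => simp at hz

lemma rcF_self_cons (a : α) (l : List α) : rcF a (a :: l) = rcF a l := by
  simp [rcF_cons]

lemma runCount_replicate_append (a : α) (c' : List α) (hc' : c'.head? ≠ some a) :
    ∀ J, runCount (List.replicate (J + 1) a ++ c') = 1 + runCount c' := by
  intro J
  induction J with
  | zero =>
    cases c' with
    | nil => simp [runCount_cons]
    | cons b t =>
      have hb : a ≠ b := by simp at hc'; exact fun h => hc' h.symm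
      simp [runCount_cons, rcF_cons, hb]
  | succ J ih =>
    rw [List.replicate_succ, List.cons_append]
    rw [List.replicate_succ, List.cons_append] at ih ⊢
    rw [runCount_cons, rcF_self_cons, ← runCount_cons, ih]
/-- the set of length-`m` subsequences of `c`. -/
def S (c : List α) (m : ℕ) : Finset (List α) :=
  c.sublists.toFinset.filter (fun y => y.length = m)

lemma mem_S {c y : List α} {m : ℕ} : y ∈ S c m ↔ y.Sublist c ∧ y.length = m := by
  simp [S, List.mem_toFinset, List.mem_sublists]

lemma S_card_zero {c : List α} {m : ℕ} (h : c.length < m) : (S c m).card = 0 := by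
  rw [Finset.card_eq_zero]
  apply Finset.eq_empty_of_forall_notMem
  intro y hy
  obtain ⟨hsub, hlen⟩ := mem_S.mp hy
  have := hsub.length_le
  omega

lemma hockey (s : ℕ) : ∀ k, ∑ i ∈ Finset.range (k + 1), (s + i).choose i = (s + k + 1).choose k := by
  intro k
  induction k with
  | zero => simp
  | succ k ih =>
    rw [Finset.sum_range_succ, ih, show s + (k + 1) = s + k + 1 from by omega]
    exact (Nat.choose_succ_succ _ _).symm

lemma lev_aux : ∀ N : ℕ, ∀ c : List α, c.length ≤ N → c ≠ [] → ∀ m : ℕ,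
    (S c m).card ≤ (runCount c - 1 + (c.length - m)).choose (c.length - m) := by
  intro N
  induction N with
  | zero => intro c hc hne m; cases c <;> simp_all
  | succ N ih =>
    rintro c hcN hne m
    rcases c with _ | ⟨a, t⟩
    · exact absurd rfl hne
    set c : List α := a :: t with hc
    by_cases hm : m ≤ c.length
    · -- main case
      set J := lead a c with hJ
      have hJpos : 1 ≤ J := by simp [hJ, hc, lead]
      have hJlen : J ≤ c.length := lead_le_length a c
      set c' := c.drop J with hc'
      have hlenc' : c'.length = c.length - J := List.length_drop
      have hsplit : c = List.replicate J a ++ c' := by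
        conv_lhs => rw [← List.take_append_drop J c]
        rw [take_lead (le_refl J)]
      have hhead : c'.head? ≠ some a := head_drop_lead a c
      by_cases hc'nil : c' = []
      · -- constant word
        have hrep : c = List.replicate J a := by rw [hsplit, hc'nil, List.append_nil]
        have hcard : (S c m).card ≤ 1 := by
          apply Finset.card_le_one.mpr
          intro y1 h1 y2 h2
          obtain ⟨hs1, hl1⟩ := mem_S.mp h1
          obtain ⟨hs2, hl2⟩ := mem_S.mp h2
          rw [hrep] at hs1 hs2
          obtain ⟨n1, _, rfl⟩ := List.sublist_replicate_iff.mp hs1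
          obtain ⟨n2, _, rfl⟩ := List.sublist_replicate_iff.mp hs2
          simp only [List.length_replicate] at hl1 hl2
          rw [hl1, hl2]
        have hpos : 0 < (runCount c - 1 + (c.length - m)).choose (c.length - m) :=
          Nat.choose_pos (by omega)
        omega
      · -- general case
        set ρ' := runCount c' with hρ'
        have hρ'pos : 1 ≤ ρ' := runCount_pos hc'nil
        have hrc : runCount c = 1 + ρ' := by
          obtain ⟨J', hJ'⟩ : ∃ J', J = J' + 1 := ⟨J - 1, by omega⟩
          rw [hsplit, hJ']
          exact runCount_replicate_append a c' hhead J'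
        set M := min J m with hM
        set T : Finset (ℕ × List α) :=
          (Finset.range (M + 1)).biUnion
            (fun tt => (S c' (m - tt)).image (Prod.mk tt)) with hT
        have hmaps : ∀ y ∈ S c m,
            (min J (lead a y), y.drop (min J (lead a y))) ∈ T := by
          intro y hy
          obtain ⟨hsub, hlen⟩ := mem_S.mp hy
          have hleady := lead_le_length a y
          rw [hT, Finset.mem_biUnion]
          refine ⟨min J (lead a y), Finset.mem_range.mpr (by omega), ?_⟩
          apply Finset.mem_image_of_mem
          rw [mem_S]
          constructor
          · rcases le_or_gt J (lead a y) with hJle | hlt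
            · rw [min_eq_left hJle]
              have hdecomp : y = List.replicate J a ++ y.drop J := by
                conv_lhs => rw [← List.take_append_drop J y]
                rw [take_lead hJle]
              rw [hsplit, hdecomp] at hsub
              exact (List.append_sublist_append_left _).mp hsub
            · rw [min_eq_right hlt.le]
              have hz : (y.drop (lead a y)).head? ≠ some a := head_drop_lead a y
              have hzy : (y.drop (lead a y)).Sublist y := List.drop_sublist _ _
              have : (y.drop (lead a y)).Sublist (List.replicate J a ++ c') := by
                rw [← hsplit]; exact hzy.trans hsub
              exact sublist_of_head_ne this hz
          · rw [List.length_drop, hlen]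
        have hinj : Set.InjOn (fun y : List α => (min J (lead a y), y.drop (min J (lead a y))))
            ↑(S c m) := by
          intro y1 h1 y2 h2 heq
          simp only [Prod.mk.injEq] at heq
          obtain ⟨ht, hd⟩ := heq
          have e1 : y1 = List.replicate (min J (lead a y1)) a ++ y1.drop (min J (lead a y1)) := by
            conv_lhs => rw [← List.take_append_drop (min J (lead a y1)) y1]
            rw [take_lead (min_le_right _ _)]
          have e2 : y2 = List.replicate (min J (lead a y2)) a ++ y2.drop (min J (lead a y2)) := by
            conv_lhs => rw [← List.take_append_drop (min J (lead a y2)) y2]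
            rw [take_lead (min_le_right _ _)]
          calc y1 = List.replicate (min J (lead a y1)) a ++ y1.drop (min J (lead a y1)) := e1
            _ = List.replicate (min J (lead a y2)) a ++ y2.drop (min J (lead a y2)) := by
                  rw [hd, ht]
            _ = y2 := e2.symm
        have hcardT : (S c m).card ≤ T.card :=
          Finset.card_le_card_of_injOn _ hmaps hinj
        have hTsum : T.card ≤ ∑ tt ∈ Finset.range (M + 1), (S c' (m - tt)).card := by
          refine le_trans (Finset.card_biUnion_le) ?_
          exact Finset.sum_le_sum (fun tt _ => Finset.card_image_le)
        set B := (Finset.range (M + 1)).filter (fun tt => m - tt ≤ c'.length) with hB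
        have hsumB : ∑ tt ∈ Finset.range (M + 1), (S c' (m - tt)).card
            = ∑ tt ∈ B, (S c' (m - tt)).card := by
          symm
          apply Finset.sum_subset (Finset.filter_subset _ _)
          intro x hx hnx
          have hxgt : ¬ (m - x ≤ c'.length) := fun hle => hnx (Finset.mem_filter.mpr ⟨hx, hle⟩)
          exact S_card_zero (by omega)
        have hc'N : c'.length ≤ N := by omega
        have hIH : ∀ tt ∈ B, (S c' (m - tt)).card
            ≤ (ρ' - 1 + (c'.length - (m - tt))).choose (c'.length - (m - tt)) :=
          fun tt _ => ih c' hc'N hc'nil (m - tt)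
        have hsum2 : ∑ tt ∈ B, (S c' (m - tt)).card
            ≤ ∑ tt ∈ B, (ρ' - 1 + (c'.length - (m - tt))).choose (c'.length - (m - tt)) :=
          Finset.sum_le_sum hIH
        have himg : ∑ tt ∈ B, (ρ' - 1 + (c'.length - (m - tt))).choose (c'.length - (m - tt))
            = ∑ i ∈ B.image (fun tt => c'.length - (m - tt)), (ρ' - 1 + i).choose i := by
          symm
          apply Finset.sum_image ?_
          intro t1 ht1 t2 ht2 hphieq
          have h1 := (Finset.mem_filter.mp ht1).2
          have h2 := (Finset.mem_filter.mp ht2).2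
          have h1' := Finset.mem_range.mp (Finset.mem_filter.mp ht1).1
          have h2' := Finset.mem_range.mp (Finset.mem_filter.mp ht2).1
          simp only [Finset.mem_coe] at hphieq h1 h2
          omega
        set k := c.length - m with hk
        have hsub3 : B.image (fun tt => c'.length - (m - tt)) ⊆ Finset.range (k + 1) := by
          intro i hi
          rw [Finset.mem_image] at hi
          obtain ⟨tt, htt, rfl⟩ := hi
          have h1 := (Finset.mem_filter.mp htt).2
          have h2 := Finset.mem_range.mp (Finset.mem_filter.mp htt).1

          rw [Finset.mem_range]
          omega
        have hsum4 : ∑ i ∈ B.image (fun tt => c'.length - (m - tt)), (ρ' - 1 + i).choose i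
            ≤ ∑ i ∈ Finset.range (k + 1), (ρ' - 1 + i).choose i :=
          Finset.sum_le_sum_of_subset hsub3
        have hhh := hockey (ρ' - 1) k
        have hfinal : (ρ' - 1 + k + 1) = runCount c - 1 + k := by omega
        calc (S c m).card ≤ T.card := hcardT
          _ ≤ ∑ tt ∈ Finset.range (M + 1), (S c' (m - tt)).card := hTsum
          _ = ∑ tt ∈ B, (S c' (m - tt)).card := hsumB
          _ ≤ ∑ tt ∈ B, (ρ' - 1 + (c'.length - (m - tt))).choose (c'.length - (m - tt)) := hsum2
          _ = ∑ i ∈ B.image (fun tt => c'.length - (m - tt)), (ρ' - 1 + i).choose i := himg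
          _ ≤ ∑ i ∈ Finset.range (k + 1), (ρ' - 1 + i).choose i := hsum4
          _ = (ρ' - 1 + k + 1).choose k := hhh
          _ = (runCount c - 1 + (c.length - m)).choose (c.length - m) := by rw [hfinal]
    · -- m > length: S empty
      have := S_card_zero (show c.length < m by omega)
      omega


/-- all words of length `k` over `Fin q`. -/
def Lq (q : ℕ) : ℕ → Finset (List (Fin q))
  | 0 => {[]}
  | k + 1 => ((Finset.univ : Finset (Fin q)) ×ˢ Lq q k).image (fun p => p.1 :: p.2)

variable {q : ℕ}
/-- all words of length `k` over `Fin q`. -/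
lemma mem_Lq {y : List (Fin q)} : ∀ {k : ℕ}, y ∈ Lq q k ↔ y.length = k := by
  intro k
  induction k generalizing y with
  | zero => cases y <;> simp [Lq]
  | succ k ih =>
    cases y with
    | nil => simp [Lq]
    | cons a t =>
      simp only [Lq, Finset.mem_image, Finset.mem_product, Finset.mem_univ, true_and,
        Prod.exists, List.length_cons]
      constructor
      · rintro ⟨b, s, hs, heq⟩
        obtain ⟨rfl, rfl⟩ : b = a ∧ s = t := by
          constructor <;> [exact (List.cons.injEq .. ▸ heq).1; exact (List.cons.injEq .. ▸ heq).2]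
        simpa using ih.mp hs
      · intro h
        exact ⟨a, t, ih.mpr (by omega), rfl⟩

lemma sumRC (hq : 1 ≤ q) : ∀ (k : ℕ) (g : ℕ → ℝ) (a : Fin q),
    ∑ y ∈ Lq q k, g (rcF a y)
      = ∑ r ∈ Finset.range (k + 1), (k.choose r : ℝ) * ((q : ℝ) - 1) ^ r * g r := by
  intro k
  induction k with
  | zero => intro g a; simp [Lq, rcF]
  | succ k ih =>
    intro g a
    have hinj : ∀ p1 ∈ (Finset.univ : Finset (Fin q)) ×ˢ Lq q k,
        ∀ p2 ∈ (Finset.univ : Finset (Fin q)) ×ˢ Lq q k,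
        (fun p : Fin q × List (Fin q) => p.1 :: p.2) p1
          = (fun p : Fin q × List (Fin q) => p.1 :: p.2) p2 → p1 = p2 := by
      rintro ⟨a1, t1⟩ _ ⟨a2, t2⟩ _ h
      simp only [List.cons.injEq] at h
      simp [h.1, h.2, Prod.ext_iff]
    rw [Lq, Finset.sum_image hinj, Finset.sum_product]
    have hsplit : ∀ b : Fin q, ∑ t ∈ Lq q k, g (rcF a (b :: t))
        = ∑ t ∈ Lq q k, g ((if a = b then 0 else 1) + rcF b t) := by
      intro b; rfl
    -- evaluate
    have hb_eq : ∑ t ∈ Lq q k, g (rcF a (a :: t))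
        = ∑ r ∈ Finset.range (k + 1), (k.choose r : ℝ) * ((q : ℝ) - 1) ^ r * g r := by
      rw [hsplit a, ← ih g a]
      apply Finset.sum_congr rfl
      intro t _
      simp
    have hb_ne : ∀ b : Fin q, b ≠ a → ∑ t ∈ Lq q k, g (rcF a (b :: t))
        = ∑ r ∈ Finset.range (k + 1), (k.choose r : ℝ) * ((q : ℝ) - 1) ^ r * g (r + 1) := by
      intro b hb
      rw [hsplit b]
      have hih := ih (fun s => g (s + 1)) b
      rw [← hih]
      apply Finset.sum_congr rfl
      intro t _
      rw [if_neg (fun h => hb h.symm), Nat.add_comm]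
    rw [Finset.sum_eq_sum_sdiff_singleton_add (Finset.mem_univ a)
        (fun b => ∑ t ∈ Lq q k, g (rcF a (b :: t)))]
    have hconst : ∑ b ∈ Finset.univ \ {a}, ∑ t ∈ Lq q k, g (rcF a (b :: t))
        = ((q : ℝ) - 1) * ∑ r ∈ Finset.range (k + 1),
            (k.choose r : ℝ) * ((q : ℝ) - 1) ^ r * g (r + 1) := by
      rw [Finset.sum_congr rfl (fun b hb => hb_ne b (by
        rw [Finset.mem_sdiff, Finset.mem_singleton] at hb; exact hb.2))]
      rw [Finset.sum_const, Finset.card_sdiff_of_subset (by simp), Finset.card_univ, Finset.card_singleton]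
      simp only [Fintype.card_fin, nsmul_eq_mul]
      congr 1
      push_cast [Nat.cast_sub hq]
      ring
    rw [hconst, hb_eq]
    -- now pure algebra over ℝ
    set x : ℝ := (q : ℝ) - 1 with hx
    -- goal: x * ∑ r in range (k+1), C(k,r) x^r g (r+1) + ∑ r in range (k+1), C(k,r) x^r g r
    --     = ∑ r in range (k+2), C(k+1,r) x^r g r
    rw [Finset.mul_sum]
    have hRHS : ∑ r ∈ Finset.range (k + 1 + 1), ((k+1).choose r : ℝ) * x ^ r * g r
        = g 0 + (∑ r ∈ Finset.range (k + 1), (k.choose r : ℝ) * x ^ (r+1) * g (r+1))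
          + ∑ r ∈ Finset.range (k + 1), (k.choose (r+1) : ℝ) * x ^ (r+1) * g (r+1) := by
      rw [Finset.sum_range_succ' (fun r => ((k+1).choose r : ℝ) * x ^ r * g r) (k+1)]
      simp only [Nat.choose_succ_succ, Nat.choose_zero_right, Nat.cast_one, pow_zero, one_mul,
        Nat.cast_add]
      rw [Finset.sum_congr rfl (fun r _ => by ring :
        ∀ r ∈ Finset.range (k+1), ((k.choose r : ℝ) + (k.choose (r+1) : ℝ)) * x ^ (r+1) * g (r+1)
          = (k.choose r : ℝ) * x ^ (r+1) * g (r+1) + (k.choose (r+1) : ℝ) * x ^ (r+1) * g (r+1))]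
      rw [Finset.sum_add_distrib]
      ring
    rw [hRHS]
    have hshift : ∑ r ∈ Finset.range (k + 1), (k.choose r : ℝ) * x ^ r * g r
        = g 0 + ∑ r ∈ Finset.range (k + 1), (k.choose (r+1) : ℝ) * x ^ (r+1) * g (r+1) := by
      have h1 : ∑ r ∈ Finset.range (k + 2), (k.choose r : ℝ) * x ^ r * g r
          = ∑ r ∈ Finset.range (k + 1), (k.choose r : ℝ) * x ^ r * g r := by
        rw [Finset.sum_range_succ]
        simp [Nat.choose_succ_self]
      rw [← h1, Finset.sum_range_succ' (fun r => (k.choose r : ℝ) * x ^ r * g r) (k+1)]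
      simp only [Nat.choose_zero_right, Nat.cast_one, pow_zero, one_mul]
      ring
    rw [hshift]
    have : ∀ r ∈ Finset.range (k+1), x * ((k.choose r : ℝ) * x ^ r * g (r+1))
        = (k.choose r : ℝ) * x ^ (r+1) * g (r+1) := by
      intro r _; ring
    rw [Finset.sum_congr rfl this]
    ring


end DelCov

open DelCov in
/-- Sphere-covering lower bound for `R`-deletion-covering codes. -/
theorem deletion_covering_lower_bound (q n R : ℕ) (hq : 2 ≤ q) (hR : 0 < R) (hRn : R < n)
    (C : Finset (List (Fin q)))
    (hlen : ∀ c ∈ C, c.length = n)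
    (hcov : ∀ y : List (Fin q), y.length = n - R → ∃ c ∈ C, y.Sublist c) :
    (q : ℝ) * ∑ r ∈ Finset.range (n - R),
      ((q : ℝ) - 1) ^ r * ((n - R - 1).choose r : ℝ) / ((r + 3 * R).choose R : ℝ)
      ≤ (C.card : ℝ) := by
  classical
  set m := n - R with hm
  have hm1 : 1 ≤ m := by omega
  set k := m - 1 with hk
  have hmk : m = k + 1 := by omega
  set g : ℕ → ℝ := fun s => 1 / (((s - 1 + 3 * R).choose R : ℕ) : ℝ) with hg
  have hgnonneg : ∀ s, 0 ≤ g s := by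
    intro s
    apply one_div_nonneg.mpr
    positivity
  -- Step 1 : LHS equals the weighted sum over all words of length m
  have hstep1 : (q : ℝ) * ∑ r ∈ Finset.range (n - R),
      ((q : ℝ) - 1) ^ r * ((n - R - 1).choose r : ℝ) / ((r + 3 * R).choose R : ℝ)
      = ∑ y ∈ Lq q m, g (runCount y) := by
    rw [hmk, Lq]
    have hinj : ∀ p1 ∈ (Finset.univ : Finset (Fin q)) ×ˢ Lq q k,
        ∀ p2 ∈ (Finset.univ : Finset (Fin q)) ×ˢ Lq q k,
        (fun p : Fin q × List (Fin q) => p.1 :: p.2) p1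
          = (fun p : Fin q × List (Fin q) => p.1 :: p.2) p2 → p1 = p2 := by
      rintro ⟨a1, t1⟩ _ ⟨a2, t2⟩ _ h
      simp only [List.cons.injEq] at h
      simp [h.1, h.2, Prod.ext_iff]
    rw [Finset.sum_image hinj, Finset.sum_product]
    have hper : ∀ a : Fin q, ∑ t ∈ Lq q k, g (runCount (a :: t))
        = ∑ r ∈ Finset.range (k + 1), (k.choose r : ℝ) * ((q : ℝ) - 1) ^ r * g (r + 1) := by
      intro a
      have hih := sumRC (by omega) k (fun s => g (s + 1)) a
      rw [← hih]
      apply Finset.sum_congr rfl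
      intro t _
      rw [runCount_cons, Nat.add_comm]
    rw [Finset.sum_congr rfl (fun a _ => hper a), Finset.sum_const, Finset.card_univ,
      Fintype.card_fin, nsmul_eq_mul]
    have hnr1 : n - R - 1 = k := by omega
    have hnr : n - R = k + 1 := by omega
    rw [hnr1, hnr]
    congr 1
    apply Finset.sum_congr rfl
    intro r _
    have hgr : g (r + 1) = 1 / (((r + 3 * R).choose R : ℕ) : ℝ) := by
      rw [hg]
      norm_num
    rw [hgr]
    ring
  rw [hstep1]
  -- Step 2 : the weighted sum is at most |C|
  have hex : ∀ y ∈ Lq q m, ∃ c ∈ C, y.Sublist c := by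
    intro y hy
    exact hcov y (mem_Lq.mp hy)
  set f : List (Fin q) → List (Fin q) :=
    fun y => if h : ∃ c ∈ C, y.Sublist c then h.choose else [] with hf
  have hfC : ∀ y ∈ Lq q m, f y ∈ C := by
    intro y hy
    rw [hf]
    simp only [dif_pos (hex y hy)]
    exact (hex y hy).choose_spec.1
  have hfsub : ∀ y ∈ Lq q m, y.Sublist (f y) := by
    intro y hy
    rw [hf]
    simp only [dif_pos (hex y hy)]
    exact (hex y hy).choose_spec.2
  rw [← Finset.sum_fiberwise_of_maps_to hfC (fun y => g (runCount y))]
  have hfiber : ∀ c ∈ C, ∑ y ∈ (Lq q m).filter (fun y => f y = c), g (runCount y) ≤ 1 := by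
    intro c hc
    have hclen : c.length = n := hlen c hc
    have hcne : c ≠ [] := by
      intro h
      rw [h] at hclen
      simp at hclen
      omega
    have hsubset : (Lq q m).filter (fun y => f y = c) ⊆ S c m := by
      intro y hy
      rw [Finset.mem_filter] at hy
      obtain ⟨hyL, hyf⟩ := hy
      rw [mem_S]
      refine ⟨?_, mem_Lq.mp hyL⟩
      rw [← hyf]
      exact hfsub y hyL
    have h1 : ∑ y ∈ (Lq q m).filter (fun y => f y = c), g (runCount y)
        ≤ ∑ y ∈ S c m, g (runCount y) :=
      Finset.sum_le_sum_of_subset_of_nonneg hsubset (fun y _ _ => hgnonneg _)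
    refine le_trans h1 ?_
    set N := (S c m).card with hN
    rcases Nat.eq_zero_or_pos N with hN0 | hNpos
    · rw [Finset.card_eq_zero] at hN0
      rw [hN0]
      simp
    · have hterm : ∀ y ∈ S c m, g (runCount y) ≤ 1 / (N : ℝ) := by
        intro y hy
        obtain ⟨hysub, hylen⟩ := mem_S.mp hy
        have hylen' : y.length = m := hylen
        have hyne : y ≠ [] := by
          intro h
          rw [h] at hylen'
          simp at hylen'
          omega
        have hrc1 : 1 ≤ runCount y := runCount_pos hyne
        have hrcc : 1 ≤ runCount c := runCount_pos hcne
        have hB1 : runCount c ≤ runCount y + 2 * R := by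
          have := runCount_sublist hysub
          have hd : c.length - y.length = R := by omega
          omega
        have hlev : N ≤ (runCount c - 1 + (c.length - m)).choose (c.length - m) :=
          lev_aux c.length c le_rfl hcne m
        have hcm : c.length - m = R := by omega
        rw [hcm] at hlev
        have hmono : (runCount c - 1 + R).choose R ≤ (runCount y - 1 + 3 * R).choose R :=
          Nat.choose_le_choose R (by omega)
        have hND : N ≤ (runCount y - 1 + 3 * R).choose R := le_trans hlev hmono
        rw [hg]
        apply one_div_le_one_div_of_le
        · exact_mod_cast hNpos
        · exact_mod_cast hND
      calc ∑ y ∈ S c m, g (runCount y) ≤ ∑ _y ∈ S c m, 1 / (N : ℝ) :=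
            Finset.sum_le_sum hterm
        _ = (N : ℝ) * (1 / (N : ℝ)) := by rw [Finset.sum_const, ← hN, nsmul_eq_mul]
        _ = 1 := by
            field_simp
  calc ∑ c ∈ C, ∑ y ∈ (Lq q m).filter (fun y => f y = c), g (runCount y)
      ≤ ∑ _c ∈ C, (1 : ℝ) := Finset.sum_le_sum hfiber
    _ = (C.card : ℝ) := by rw [Finset.sum_const, nsmul_eq_mul, mul_one]
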